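/- If f ∈ FinStoch(m,n) and f' ∈ FinStoch(m',n) are stochastic matrices whose column-images have equal convex hulls in D(n), then there exist a finite set m'', a stochastic matrix h ∈ FinStoch(m'', n), and surjective stochastic maps g : m → m'' and g' : m' → m'' such that f = h ∘ g and f' = h ∘ g'. -/

import Mathlib

/-- Stochastic matrix predicate: columns are probability vectors. -/
def FinStochMat {m n : ℕ} (f : Fin n → Fin m → ℝ) : Prop :=
  (∀ a i, 0 ≤ f a i) ∧ ∀ i, ∑ a, f a i = 1

/-- A stochastic map is surjective if every Dirac distribution on the codomain
appears among its columns. -/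
def SurjStoch {m n : ℕ} (f : Fin n → Fin m → ℝ) : Prop :=
  ∀ j : Fin n, ∃ i : Fin m, (fun a => f a i) = fun a => if a = j then (1 : ℝ) else 0

lemma finset_sum_equivFin {α M : Type*} [AddCommMonoid M] (s : Finset α) (F : α → M) :
    ∑ y ∈ s, F y = ∑ j : Fin s.card, F ↑(s.equivFin.symm j) := by
  rw [← Finset.sum_coe_sort s F]
  exact (Equiv.sum_comp s.equivFin.symm fun x => F ↑x).symm

/-- If two stochastic matrices have columns with equal convex hulls, they factor
through a common stochastic matrix via surjective stochastic maps. -/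
theorem common_factorization {m m' n : ℕ}
    (f : Fin n → Fin m → ℝ) (f' : Fin n → Fin m' → ℝ)
    (hf : FinStochMat f) (hf' : FinStochMat f')
    (hhull : convexHull ℝ (Set.range (fun i : Fin m => fun a => f a i))
        = convexHull ℝ (Set.range (fun i : Fin m' => fun a => f' a i))) :
    ∃ m'' : ℕ, ∃ h : Fin n → Fin m'' → ℝ,
      ∃ g : Fin m'' → Fin m → ℝ, ∃ g' : Fin m'' → Fin m' → ℝ,
        FinStochMat h ∧ FinStochMat g ∧ SurjStoch g ∧ FinStochMat g' ∧ SurjStoch g' ∧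
        (∀ a i, f a i = ∑ j, h a j * g j i) ∧
        (∀ a i, f' a i = ∑ j, h a j * g' j i) := by
  classical
  set colf : Fin m → (Fin n → ℝ) := fun i a => f a i with hcolf
  set colf' : Fin m' → (Fin n → ℝ) := fun i a => f' a i with hcolf'
  set S := convexHull ℝ (Set.range colf) with hS
  have hfin : (Set.range colf).Finite := Set.finite_range _
  have hE_sub : S.extremePoints ℝ ⊆ Set.range colf := extremePoints_convexHull_subset
  have hE_sub' : S.extremePoints ℝ ⊆ Set.range colf' := by
    rw [hhull]; exact extremePoints_convexHull_subset
  have hEfin : (S.extremePoints ℝ).Finite := hfin.subset hE_sub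
  have hKM : convexHull ℝ (S.extremePoints ℝ) = S := by
    have h1 := closure_convexHull_extremePoints (hfin.isCompact_convexHull (𝕜 := ℝ))
      (convex_convexHull _ _)
    rwa [(hEfin.isCompact_convexHull (𝕜 := ℝ)).isClosed.closure_eq] at h1
  set E' : Finset (Fin n → ℝ) := hEfin.toFinset with hE'
  have hhullE' : convexHull ℝ (↑E' : Set (Fin n → ℝ)) = S := by
    rw [hE', hEfin.coe_toFinset]; exact hKM
  set m'' := E'.card with hm''
  set dat : Fin m'' → (Fin n → ℝ) := fun j => ↑(E'.equivFin.symm j) with hdat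
  have hdat_inj : Function.Injective dat := fun j k hjk =>
    E'.equivFin.symm.injective (Subtype.coe_injective hjk)
  have hdat_mem : ∀ j, dat j ∈ S.extremePoints ℝ := fun j =>
    hEfin.mem_toFinset.mp (E'.equivFin.symm j).2
  -- representation of elements of S as convex combinations of `dat`
  have rep : ∀ x ∈ S, ∃ w : Fin m'' → ℝ,
      (∀ j, 0 ≤ w j) ∧ (∑ j, w j = 1) ∧ ∑ j, w j • dat j = x := by
    intro x hx
    rw [← hhullE', Finset.convexHull_eq] at hx
    obtain ⟨w, hw0, hw1, hwx⟩ := hx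
    rw [Finset.centerMass_eq_of_sum_1 _ _ hw1] at hwx
    refine ⟨fun j => w (dat j), fun j => hw0 _ ((hEfin.mem_toFinset).2 (hdat_mem j)), ?_, ?_⟩
    · rw [← hw1, finset_sum_equivFin E' w]
    · rw [← hwx, finset_sum_equivFin E' (fun y => w y • id y)]
      rfl
  have hmemS : ∀ i, colf i ∈ S := fun i => subset_convexHull _ _ ⟨i, rfl⟩
  have hmemS' : ∀ i, colf' i ∈ S := by
    intro i; rw [hhull]; exact subset_convexHull _ _ ⟨i, rfl⟩
  -- sections: each extreme point is a column of f and of f'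
  have hσex : ∀ j : Fin m'', ∃ i : Fin m, colf i = dat j := fun j => by
    obtain ⟨i, hi⟩ := hE_sub (hdat_mem j); exact ⟨i, hi⟩
  have hσ'ex : ∀ j : Fin m'', ∃ i : Fin m', colf' i = dat j := fun j => by
    obtain ⟨i, hi⟩ := hE_sub' (hdat_mem j); exact ⟨i, hi⟩
  choose σ hσ using hσex
  choose σ' hσ' using hσ'ex
  have hσinj : Function.Injective σ := fun j k hjk =>
    hdat_inj (by rw [← hσ j, ← hσ k, hjk])
  have hσ'inj : Function.Injective σ' := fun j k hjk =>
    hdat_inj (by rw [← hσ' j, ← hσ' k, hjk])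
  -- weights for f
  have hwex : ∀ i : Fin m, ∃ w : Fin m'' → ℝ,
      (∀ j, 0 ≤ w j) ∧ (∑ j, w j = 1) ∧ (∑ j, w j • dat j = colf i) ∧
      ∀ j, σ j = i → w = fun k => if k = j then (1 : ℝ) else 0 := by
    intro i
    by_cases hi : ∃ j, σ j = i
    · obtain ⟨j₀, hj₀⟩ := hi
      refine ⟨fun k => if k = j₀ then 1 else 0,
        fun j => by dsimp only; split <;> norm_num, by simp, ?_, ?_⟩
      · rw [← hj₀, hσ j₀]
        simp
      · intro j hj
        have : j = j₀ := hσinj (hj.trans hj₀.symm)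
        subst this; rfl
    · obtain ⟨w, h0, h1, hx⟩ := rep (colf i) (hmemS i)
      exact ⟨w, h0, h1, hx, fun j hj => absurd ⟨j, hj⟩ hi⟩
  have hwex' : ∀ i : Fin m', ∃ w : Fin m'' → ℝ,
      (∀ j, 0 ≤ w j) ∧ (∑ j, w j = 1) ∧ (∑ j, w j • dat j = colf' i) ∧
      ∀ j, σ' j = i → w = fun k => if k = j then (1 : ℝ) else 0 := by
    intro i
    by_cases hi : ∃ j, σ' j = i
    · obtain ⟨j₀, hj₀⟩ := hi
      refine ⟨fun k => if k = j₀ then 1 else 0,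
        fun j => by dsimp only; split <;> norm_num, by simp, ?_, ?_⟩
      · rw [← hj₀, hσ' j₀]
        simp
      · intro j hj
        have : j = j₀ := hσ'inj (hj.trans hj₀.symm)
        subst this; rfl
    · obtain ⟨w, h0, h1, hx⟩ := rep (colf' i) (hmemS' i)
      exact ⟨w, h0, h1, hx, fun j hj => absurd ⟨j, hj⟩ hi⟩
  choose w hw0 hw1 hwc hwd using hwex
  choose w' hw'0 hw'1 hw'c hw'd using hwex'
  refine ⟨m'', fun a j => dat j a, fun j i => w i j, fun j i => w' i j,
    ⟨?_, ?_⟩, ⟨fun j i => hw0 i j, fun i => hw1 i⟩, ?_,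
    ⟨fun j i => hw'0 i j, fun i => hw'1 i⟩, ?_, ?_, ?_⟩
  · intro a j
    show 0 ≤ dat j a
    rw [← hσ j]
    exact hf.1 a (σ j)
  · intro j
    show ∑ a, dat j a = 1
    have hda : ∀ a, dat j a = f a (σ j) := fun a => congrFun (hσ j).symm a
    rw [Finset.sum_congr rfl fun a _ => hda a]
    exact hf.2 (σ j)
  · intro j
    exact ⟨σ j, by rw [show (fun a => w (σ j) a) = w (σ j) from rfl, hwd (σ j) j rfl]⟩
  · intro j
    exact ⟨σ' j, by rw [show (fun a => w' (σ' j) a) = w' (σ' j) from rfl, hw'd (σ' j) j rfl]⟩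
  · intro a i
    have h2 := congrFun (hwc i) a
    simp only [Finset.sum_apply, Pi.smul_apply, smul_eq_mul] at h2
    have h3 : f a i = ∑ j, w i j * dat j a := h2.symm
    rw [h3]
    exact Finset.sum_congr rfl fun j _ => mul_comm _ _
  · intro a i
    have h2 := congrFun (hw'c i) a
    simp only [Finset.sum_apply, Pi.smul_apply, smul_eq_mul] at h2
    have h3 : f' a i = ∑ j, w' i j * dat j a := h2.symm
    rw [h3]
    exact Finset.sum_congr rfl fun j _ => mul_comm _ _
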